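/- arXiv:1206.5397 — 2 statements merged into one kernel-verified Lean document; each statement's English description precedes it below -/
import Mathlib

section
/- Let k ≥ 3. If a graph G is not k-chordal (i.e., has an induced cycle of length at least k+1), then there exists a minimal vertex separator S of G, non-adjacent vertices x, z ∈ S, and induced x–z paths P and P' with internal vertices in two distinct components of G − S, such that ||P|| + ||P'|| ≥ k+1. -/
open SimpleGraph

variable {V : Type*}

/-- Open neighbourhood of a set of vertices. -/
def setNbhd (G : SimpleGraph V) (A : Set V) : Set V :=
  {x | x ∉ A ∧ ∃ a ∈ A, G.Adj a x}

/-- Closed neighbourhood of a set of vertices. -/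
def closedNbhd (G : SimpleGraph V) (A : Set V) : Set V :=
  A ∪ setNbhd G A

/-- `A` is a connected non-dominating set: `G[A]` is connected and `N[A] ⊊ V`. -/
def ConnNonDom (G : SimpleGraph V) (A : Set V) : Prop :=
  (G.induce A).Connected ∧ closedNbhd G A ≠ Set.univ

/-- `A` is a maximal connected non-dominating set. -/
def MaxConnNonDom (G : SimpleGraph V) (A : Set V) : Prop :=
  ConnNonDom G A ∧ ∀ A' : Set V, A ⊆ A' → ConnNonDom G A' → A' = A

/-- `G` is not complete. -/
def NonComplete (G : SimpleGraph V) : Prop :=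
  ∃ u v : V, u ≠ v ∧ ¬ G.Adj u v

/-- A chordless (induced) path. -/
def IsInducedPath (G : SimpleGraph V) {x y : V} (p : G.Walk x y) : Prop :=
  p.IsPath ∧ ∀ u w : V, u ∈ p.support → w ∈ p.support → G.Adj u w → s(u, w) ∈ p.edges

/-- A chordless (induced) cycle. -/
def IsInducedCycle (G : SimpleGraph V) {v : V} (c : G.Walk v v) : Prop :=
  c.IsCycle ∧ ∀ u w : V, u ∈ c.support → w ∈ c.support → G.Adj u w → s(u, w) ∈ c.edges

/-- `G` is `k`-chordal: no induced cycle of length greater than `k`. -/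
def KChordal (G : SimpleGraph V) (k : ℕ) : Prop :=
  ∀ ⦃v : V⦄ (c : G.Walk v v), IsInducedCycle G c → c.length ≤ k

/-- `u` is an internal vertex of the path `p`. -/
def InternalVert (G : SimpleGraph V) {x y : V} (p : G.Walk x y) (u : V) : Prop :=
  u ∈ p.support ∧ u ≠ x ∧ u ≠ y

/-- Condition (C1): any two distinct neighbours of `v` are at distance at most `k-2`
in `G - v`. -/
def SimpC1 (G : SimpleGraph V) (k : ℕ) (v : V) : Prop :=
  ∀ x y : V, G.Adj v x → G.Adj v y → x ≠ y →
    ∃ (hx : x ≠ v) (hy : y ≠ v)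
      (p : (G.induce {u : V | u ≠ v}).Walk ⟨x, hx⟩ ⟨y, hy⟩), p.length ≤ k - 2

/-- Condition (C2): every induced path between non-adjacent neighbours of `v` whose
internal vertices avoid `N[v]` has at most `k-2` edges. -/
def SimpC2 (G : SimpleGraph V) (k : ℕ) (v : V) : Prop :=
  ∀ x y : V, G.Adj v x → G.Adj v y → ¬ G.Adj x y → x ≠ y →
    ∀ p : G.Walk x y, IsInducedPath G p →
      (∀ u : V, InternalVert G p u → u ≠ v ∧ ¬ G.Adj v u) →
      p.length ≤ k - 2

/-- `v` is `k`-simplicial in `G`. -/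
def KSimplicial (G : SimpleGraph V) (k : ℕ) (v : V) : Prop :=
  SimpC1 G k v ∧ SimpC2 G k v

/-- Vertices at position `≥ i` in the ordering `σ`. -/
def laterSet {V : Type*} [Fintype V] (σ : Fin (Fintype.card V) ≃ V)
    (i : Fin (Fintype.card V)) : Set V := {w | i ≤ σ.symm w}

/-- `σ` is a `k`-simplicial ordering of the vertices of `G`. -/
def KSimplicialOrdering {V : Type*} [Fintype V] (G : SimpleGraph V) (k : ℕ)
    (σ : Fin (Fintype.card V) ≃ V) : Prop :=
  ∀ i : Fin (Fintype.card V),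
    KSimplicial (G.induce (laterSet σ i)) k ⟨σ i, by simp [laterSet]⟩

/-- `S` separates `a` from `b`. -/
def IsSeparator (G : SimpleGraph V) (a b : V) (S : Set V) : Prop :=
  a ∉ S ∧ b ∉ S ∧ ∀ p : G.Walk a b, ∃ s ∈ S, s ∈ p.support

/-- `S` is a minimal `(a,b)`-vertex separator. -/
def IsMinSeparator (G : SimpleGraph V) (a b : V) (S : Set V) : Prop :=
  IsSeparator G a b S ∧ ∀ T : Set V, T ⊂ S → ¬ IsSeparator G a b T

/-- `S` is a minimal vertex separator of `G`. -/
def IsMinVertexSeparator (G : SimpleGraph V) (S : Set V) : Prop :=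
  ∃ a b : V, a ≠ b ∧ ¬ G.Adj a b ∧ IsMinSeparator G a b S

/-- `u` lies in the connected component `c` of `G - S`. -/
def InComponent (G : SimpleGraph V) (S : Set V)
    (c : (G.induce Sᶜ).ConnectedComponent) (u : V) : Prop :=
  ∃ h : u ∈ Sᶜ, (G.induce Sᶜ).connectedComponentMk ⟨u, h⟩ = c

/-- `v` is 3-simplicial: its neighbourhood is a clique. -/
def Simplicial3 (G : SimpleGraph V) (v : V) : Prop :=
  ∀ x y : V, G.Adj v x → G.Adj v y → x ≠ y → G.Adj x y

lemma cross_nbhd (G : SimpleGraph V) (A : Set V) : ∀ {u w : V} (p : G.Walk u w),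
    u ∈ A → w ∉ A → ∃ s ∈ p.support, s ∈ setNbhd G A := by
  intro u w p
  induction p with
  | nil => intro hu hw; exact absurd hu hw
  | @cons a b c h p ih =>
    intro hu hw
    by_cases hb : b ∈ A
    · obtain ⟨s, hs, hs2⟩ := ih hb hw
      exact ⟨s, by simp [hs], hs2⟩
    · exact ⟨b, by simp, hb, a, hu, h⟩

lemma reachable_induce_of_walk (G : SimpleGraph V) (A : Set V) :
    ∀ {u w : V} (p : G.Walk u w) (hp : ∀ x ∈ p.support, x ∈ A),
    (G.induce A).Reachable ⟨u, hp u p.start_mem_support⟩ ⟨w, hp w p.end_mem_support⟩ := by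
  intro u w p
  induction p with
  | nil => intro hp; rfl
  | @cons a b c h p ih =>
    intro hp
    have hb : b ∈ A := hp b (by simp)
    have ha : a ∈ A := hp a (by simp)
    have := ih (fun x hx => hp x (by simp [hx]))
    exact (Adj.reachable (by exact h : (G.induce A).Adj ⟨a, ha⟩ ⟨b, hb⟩)).trans this

lemma exists_walk_of_induce_reachable (G : SimpleGraph V) (A : Set V) {u w : A}
    (h : (G.induce A).Reachable u w) :
    ∃ p : G.Walk u.1 w.1, ∀ x ∈ p.support, x ∈ A := by
  obtain ⟨q⟩ := h
  induction q with
  | nil => exact ⟨Walk.nil, by simp⟩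
  | @cons a b c h q ih =>
    obtain ⟨p, hp⟩ := ih
    exact ⟨Walk.cons (by exact h) p, by
      intro x hx
      rcases (by exact List.mem_cons.mp hx : x = a.1 ∨ x ∈ p.support) with rfl | hx
      · exact a.2
      · exact hp x hx⟩

lemma exists_min_sep (G : SimpleGraph V) (a b : V) :
    ∀ (n : ℕ) (S₀ : Set V), S₀.ncard ≤ n → S₀.Finite → IsSeparator G a b S₀ →
    ∃ S ⊆ S₀, IsSeparator G a b S ∧ ∀ T ⊂ S, ¬ IsSeparator G a b T := by
  intro n
  induction n with
  | zero =>
    intro S₀ hn hfin hsep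
    refine ⟨S₀, le_refl _, hsep, fun T hT hTs => ?_⟩
    have he : S₀ = ∅ := by rwa [Nat.le_zero, Set.ncard_eq_zero hfin] at hn
    rw [he] at hT
    exact hT.2 (by simp [Set.subset_empty_iff.mp hT.1])
  | succ n ih =>
    intro S₀ hn hfin hsep
    by_cases hmin : ∀ T ⊂ S₀, ¬ IsSeparator G a b T
    · exact ⟨S₀, le_refl _, hsep, hmin⟩
    · push_neg at hmin
      obtain ⟨T, hT, hTs⟩ := hmin
      have hTfin : T.Finite := hfin.subset hT.subset
      have hTn : T.ncard ≤ n := by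
        have := Set.ncard_lt_ncard hT hfin
        omega
      obtain ⟨S, hS1, hS2, hS3⟩ := ih T hTn hTfin hTs
      exact ⟨S, hS1.trans hT.subset, hS2, hS3⟩

theorem stmt13 [Fintype V] (G : SimpleGraph V) (k : ℕ) (hk : 3 ≤ k)
    (h : ¬ KChordal G k) :
    ∃ S : Set V, IsMinVertexSeparator G S ∧
      ∃ x z : V, x ∈ S ∧ z ∈ S ∧ x ≠ z ∧ ¬ G.Adj x z ∧
        ∃ (c c' : (G.induce Sᶜ).ConnectedComponent), c ≠ c' ∧
          ∃ (P P' : G.Walk x z), IsInducedPath G P ∧ IsInducedPath G P' ∧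
            (∀ u : V, InternalVert G P u → InComponent G S c u) ∧
            (∀ u : V, InternalVert G P' u → InComponent G S c' u) ∧
            k + 1 ≤ P.length + P'.length := by
  unfold KChordal at h
  push_neg at h
  obtain ⟨v0, c, ⟨hcyc, hchord⟩, hlen⟩ := h
  cases c with
  | nil => exact absurd hlen (by simp <;> omega)
  | cons h01 p1 =>
  rename_i v1
  cases p1 with
  | nil => exact absurd hlen (by simp <;> omega)
  | cons h12 q =>
  rename_i v2
  cases q with
  | nil => exact absurd hlen (by simp <;> omega)
  | cons h23 r =>
  rename_i v3
  -- basic facts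
  have hlen' : k < r.length + 3 := by simp at hlen; omega
  have hrlen : 1 ≤ r.length := by omega
  have hnd := hcyc.support_nodup
  simp only [Walk.support_cons, List.tail_cons, List.nodup_cons, List.mem_cons] at hnd
  obtain ⟨hv1n, hv2r, hrnd⟩ := hnd
  push_neg at hv1n
  obtain ⟨hv12, hv1r⟩ := hv1n
  have hv0r : v0 ∈ r.support := r.end_mem_support
  have hv3r : v3 ∈ r.support := r.start_mem_support
  have hv02 : v0 ≠ v2 := fun e => hv2r (e ▸ hv0r)
  have hv13 : v1 ≠ v3 := fun e => hv1r (e ▸ hv3r)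
  have hrpath : r.IsPath := Walk.IsPath.mk' hrnd
  have hv30 : v3 ≠ v0 := by
    intro e
    subst e
    rw [Walk.isPath_iff_eq_nil] at hrpath
    subst hrpath
    simp at hrlen
  -- edges of c
  have hedges : (Walk.cons h01 (Walk.cons h12 (Walk.cons h23 r))).edges
      = s(v0, v1) :: s(v1, v2) :: s(v2, v3) :: r.edges := by
    simp [Walk.edges_cons]
  have hsupc : (Walk.cons h01 (Walk.cons h12 (Walk.cons h23 r))).support
      = v0 :: v1 :: v2 :: r.support := by
    simp [Walk.support_cons]
  -- the component set A (interior of long arc)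
  set A : Set V := {u | u ∈ r.support ∧ u ≠ v0} with hA
  have hv3A : v3 ∈ A := ⟨hv3r, hv30⟩
  have hv0A : v0 ∉ A := fun hu => hu.2 rfl
  have hv1A : v1 ∉ A := fun hu => hv1r hu.1
  have hv2A : v2 ∉ A := fun hu => hv2r hu.1
  set S₀ : Set V := setNbhd G A with hS₀
  have hAS₀ : ∀ u ∈ A, u ∉ S₀ := fun u hu hs => hs.1 hu
  -- no vertex of A is adjacent to v1
  have hA1 : ∀ u ∈ A, ¬ G.Adj u v1 := by
    intro u hu hadj
    have hus : u ∈ (Walk.cons h01 (Walk.cons h12 (Walk.cons h23 r))).support := by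
      rw [hsupc]; simp [hu.1]
    have h1s : v1 ∈ (Walk.cons h01 (Walk.cons h12 (Walk.cons h23 r))).support := by
      rw [hsupc]; simp
    have hmem := hchord u v1 hus h1s hadj
    rw [hedges] at hmem
    rcases List.mem_cons.mp hmem with h' | hmem
    · rcases Sym2.eq_iff.mp h' with ⟨e1, _⟩ | ⟨e1, _⟩
      · exact hv0A (e1 ▸ hu)
      · exact hadj.ne e1
    rcases List.mem_cons.mp hmem with h' | hmem
    · rcases Sym2.eq_iff.mp h' with ⟨e1, _⟩ | ⟨e1, _⟩
      · exact hadj.ne e1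
      · exact hv2A (e1 ▸ hu)
    rcases List.mem_cons.mp hmem with h' | hmem
    · rcases Sym2.eq_iff.mp h' with ⟨_, e2⟩ | ⟨_, e2⟩
      · exact hv13 e2
      · exact hv12 e2
    · exact hv1r (r.snd_mem_support_of_mem_edges hmem)
  have hv1S₀ : v1 ∉ S₀ := by
    intro hs
    obtain ⟨a, ha, hadj⟩ := hs.2
    exact hA1 a ha hadj
  -- v0 and v2 not adjacent
  have hadj02 : ¬ G.Adj v0 v2 := by
    intro hadj
    have h0s : v0 ∈ (Walk.cons h01 (Walk.cons h12 (Walk.cons h23 r))).support := by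
      rw [hsupc]; simp
    have h2s : v2 ∈ (Walk.cons h01 (Walk.cons h12 (Walk.cons h23 r))).support := by
      rw [hsupc]; simp
    have hmem := hchord v0 v2 h0s h2s hadj
    rw [hedges] at hmem
    rcases List.mem_cons.mp hmem with h' | hmem
    · rcases Sym2.eq_iff.mp h' with ⟨_, e2⟩ | ⟨e1, _⟩
      · exact hv12 e2.symm
      · exact h01.ne e1
    rcases List.mem_cons.mp hmem with h' | hmem
    · rcases Sym2.eq_iff.mp h' with ⟨e1, _⟩ | ⟨e1, _⟩
      · exact h01.ne e1
      · exact hv02 e1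
    rcases List.mem_cons.mp hmem with h' | hmem
    · rcases Sym2.eq_iff.mp h' with ⟨e1, _⟩ | ⟨e1, _⟩
      · exact hv02 e1
      · exact hv30 e1.symm
    · exact hv2r (r.snd_mem_support_of_mem_edges hmem)
  -- the long arc q = cons h23 r is an induced path
  have hqsup : (Walk.cons h23 r).support = v2 :: r.support := by simp
  have hqnd : (Walk.cons h23 r).support.Nodup := by
    rw [hqsup]; exact List.nodup_cons.mpr ⟨hv2r, hrnd⟩
  have hqpath : (Walk.cons h23 r).IsPath := Walk.IsPath.mk' hqnd
  have hchordq : ∀ u w : V, u ∈ (Walk.cons h23 r).support → w ∈ (Walk.cons h23 r).support →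
      G.Adj u w → s(u, w) ∈ (Walk.cons h23 r).edges := by
    intro u w hu hw hadj
    have hv1q : v1 ∉ (Walk.cons h23 r).support := by
      rw [hqsup]
      intro hm
      rcases List.mem_cons.mp hm with e | hm
      · exact hv12 e
      · exact hv1r hm
    have hus : u ∈ (Walk.cons h01 (Walk.cons h12 (Walk.cons h23 r))).support := by
      rw [hsupc]; rw [hqsup] at hu; simp at hu ⊢; tauto
    have hws : w ∈ (Walk.cons h01 (Walk.cons h12 (Walk.cons h23 r))).support := by
      rw [hsupc]; rw [hqsup] at hw; simp at hw ⊢; tauto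
    have hmem := hchord u w hus hws hadj
    rw [hedges] at hmem
    have hqe : (Walk.cons h23 r).edges = s(v2, v3) :: r.edges := by simp
    rw [hqe]
    rcases List.mem_cons.mp hmem with h' | hmem
    · rcases Sym2.eq_iff.mp h' with ⟨_, e2⟩ | ⟨e1, _⟩
      · exact absurd hw (e2 ▸ hv1q)
      · exact absurd hu (e1 ▸ hv1q)
    rcases List.mem_cons.mp hmem with h' | hmem
    · rcases Sym2.eq_iff.mp h' with ⟨e1, _⟩ | ⟨_, e2⟩
      · exact absurd hu (e1 ▸ hv1q)
      · exact absurd hw (e2 ▸ hv1q)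
    · exact hmem
  -- S₀ separates v3 from v1
  have hv1A' : v1 ∉ A := hv1A
  have hS₀sep : IsSeparator G v3 v1 S₀ := by
    refine ⟨hAS₀ v3 hv3A, hv1S₀, fun p => ?_⟩
    obtain ⟨s, hs1, hs2⟩ := cross_nbhd G A p hv3A hv1A'
    exact ⟨s, hs2, hs1⟩
  -- minimal separator S ⊆ S₀
  obtain ⟨S, hSS₀, hSsep, hSmin⟩ :=
    exists_min_sep G v3 v1 S₀.ncard S₀ le_rfl (Set.toFinite _) hS₀sep
  have hAS : ∀ u ∈ A, u ∉ S := fun u hu hs => hAS₀ u hu (hSS₀ hs)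
  have hv1S : v1 ∉ S := fun hs => hv1S₀ (hSS₀ hs)
  -- v0 ∈ S
  have hv0S : v0 ∈ S := by
    obtain ⟨s, hs1, hs2⟩ := hSsep.2.2 (r.append (Walk.cons h01 Walk.nil))
    rw [Walk.support_append] at hs2
    simp only [Walk.support_cons, Walk.support_nil, List.tail_cons, List.mem_append,
      List.mem_singleton] at hs2
    rcases hs2 with hs2 | rfl
    · by_cases he : s = v0
      · exact he ▸ hs1
      · exact absurd hs1 (hAS s ⟨hs2, he⟩)
    · exact absurd hs1 hv1S
  -- v2 ∈ S
  have hv2S : v2 ∈ S := by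
    obtain ⟨s, hs1, hs2⟩ := hSsep.2.2 (Walk.cons h23.symm (Walk.cons h12.symm Walk.nil))
    simp only [Walk.support_cons, Walk.support_nil, List.mem_cons, List.mem_singleton,
      List.not_mem_nil, or_false] at hs2
    rcases hs2 with rfl | rfl | rfl
    · exact absurd hs1 (hAS s hv3A)
    · exact hs1
    · exact absurd hs1 hv1S
  -- components
  have hASc : ∀ u ∈ A, u ∈ Sᶜ := fun u hu => hAS u hu
  have hv1Sc : v1 ∈ Sᶜ := hv1S
  have hv3Sc : v3 ∈ Sᶜ := hASc v3 hv3A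
  set cc1 := (G.induce Sᶜ).connectedComponentMk ⟨v1, hv1Sc⟩ with hcc1
  set cc2 := (G.induce Sᶜ).connectedComponentMk ⟨v3, hv3Sc⟩ with hcc2
  have hccne : cc1 ≠ cc2 := by
    intro he
    rw [hcc1, hcc2, ConnectedComponent.eq] at he
    obtain ⟨p, hp⟩ := exists_walk_of_induce_reachable G Sᶜ he
    obtain ⟨s, hs1, hs2⟩ := hSsep.2.2 p.reverse
    rw [Walk.support_reverse, List.mem_reverse] at hs2
    exact hp s hs2 hs1
  -- the two paths
  refine ⟨S, ⟨v3, v1, Ne.symm hv13, fun ha => hA1 v3 hv3A ha, hSsep, hSmin⟩,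
    v0, v2, hv0S, hv2S, hv02, hadj02, cc1, cc2, hccne,
    Walk.cons h01 (Walk.cons h12 Walk.nil), (Walk.cons h23 r).reverse, ?_, ?_, ?_, ?_, ?_⟩
  · -- P induced
    constructor
    · rw [Walk.isPath_def]
      simp [hv02, hv12, h01.ne]
    · intro u w hu hw hadj
      simp only [Walk.support_cons, Walk.support_nil, List.mem_cons, List.not_mem_nil,
        or_false, List.mem_singleton] at hu hw
      simp only [Walk.edges_cons, Walk.edges_nil, List.mem_cons, List.not_mem_nil, or_false,
        List.mem_singleton]
      rcases hu with rfl | rfl | rfl <;> rcases hw with rfl | rfl | rfl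
      · exact absurd rfl hadj.ne
      · exact Or.inl rfl
      · exact absurd hadj hadj02
      · exact Or.inl (Sym2.eq_swap)
      · exact absurd rfl hadj.ne
      · exact Or.inr rfl
      · exact absurd hadj.symm hadj02
      · exact Or.inr (Sym2.eq_swap)
      · exact absurd rfl hadj.ne
  · -- P' induced
    constructor
    · exact hqpath.reverse
    · intro u w hu hw hadj
      rw [Walk.support_reverse, List.mem_reverse] at hu hw
      rw [Walk.edges_reverse, List.mem_reverse]
      exact hchordq u w hu hw hadj
  · -- internal verts of P
    intro u hu
    obtain ⟨hus, hu0, hu2⟩ := hu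
    simp only [Walk.support_cons, Walk.support_nil, List.mem_cons, List.not_mem_nil,
      or_false, List.mem_singleton] at hus
    rcases hus with rfl | rfl | rfl
    · exact absurd rfl hu0
    · exact ⟨hv1Sc, rfl⟩
    · exact absurd rfl hu2
  · -- internal verts of P'
    intro u hu
    obtain ⟨hus, hu0, hu2⟩ := hu
    rw [Walk.support_reverse, List.mem_reverse, hqsup] at hus
    rcases List.mem_cons.mp hus with rfl | hur
    · exact absurd rfl hu2
    have huA : u ∈ A := ⟨hur, hu0⟩
    refine ⟨hASc u huA, ?_⟩
    rw [hcc2, ConnectedComponent.eq]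
    -- walk from v3 to u inside A ⊆ Sᶜ via takeUntil
    classical
    have hv0t : v0 ∉ (r.takeUntil u hur).support := by
      intro hv0t
      have hspec := r.take_spec hur
      have hnd2 : ((r.takeUntil u hur).append (r.dropUntil u hur)).support.Nodup := by
        rw [hspec]; exact hrnd
      rw [Walk.support_append] at hnd2
      have hdisj := List.disjoint_of_nodup_append hnd2
      have hv0d : v0 ∈ (r.dropUntil u hur).support.tail := by
        have := (r.dropUntil u hur).end_mem_support
        rw [Walk.support_eq_cons (r.dropUntil u hur)] at this
        rcases List.mem_cons.mp this with he | ht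
        · exact absurd he.symm hu0
        · exact ht
      exact hdisj hv0t hv0d
    have hsub : ∀ x ∈ (r.takeUntil u hur).support, x ∈ Sᶜ := by
      intro x hx
      have hxr : x ∈ r.support := r.support_takeUntil_subset hur hx
      have hx0 : x ≠ v0 := fun e => hv0t (e ▸ hx)
      exact hASc x ⟨hxr, hx0⟩
    have := reachable_induce_of_walk G Sᶜ (r.takeUntil u hur) hsub
    exact (this.symm : (G.induce Sᶜ).Reachable ⟨u, _⟩ ⟨v3, _⟩)
  · -- length
    simp only [Walk.length_cons, Walk.length_nil, Walk.length_reverse]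
    omega
end

section
/- For a graph G with a vertex ordering π = [v_1, …, v_n] that is a k-simplicial ordering (k ≥ 3), there is no induced cycle C of length at least k+1: if such C existed, its minimum-indexed vertex v_i would have its two C-neighbours later in the ordering, and the v_j–v_l path along C would be an induced path of length at least k−1 in G[{v_i, …, v_n}] with internal vertices avoiding N[v_i], contradicting that v_i is k-simplicial. -/
open SimpleGraph

variable {V : Type*}

namespace MyAux

/-- Lift a walk into an induced subgraph containing its support. -/
def lift {G : SimpleGraph V} {A : Set V} :
    ∀ {x y : V} (p : G.Walk x y) (h : ∀ u ∈ p.support, u ∈ A),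
      (G.induce A).Walk ⟨x, h x p.start_mem_support⟩ ⟨y, h y p.end_mem_support⟩
  | _, _, Walk.nil, _ => Walk.nil
  | _, _, Walk.cons hadj q, h =>
      Walk.cons (by exact hadj)
        (lift q fun u hu => h u (by simp [Walk.support_cons, hu]))

@[simp] lemma lift_length {G : SimpleGraph V} {A : Set V} :
    ∀ {x y : V} (p : G.Walk x y) (h : ∀ u ∈ p.support, u ∈ A),
      (lift p h).length = p.length
  | _, _, Walk.nil, _ => rfl
  | _, _, Walk.cons hadj q, h => by
      exact congrArg (· + 1) (lift_length q _)

@[simp] lemma lift_support {G : SimpleGraph V} {A : Set V} :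
    ∀ {x y : V} (p : G.Walk x y) (h : ∀ u ∈ p.support, u ∈ A),
      (lift p h).support.map Subtype.val = p.support
  | _, _, Walk.nil, _ => rfl
  | _, _, Walk.cons hadj q, h => by
      exact congrArg (List.cons _) (lift_support q _)

@[simp] lemma lift_edges {G : SimpleGraph V} {A : Set V} :
    ∀ {x y : V} (p : G.Walk x y) (h : ∀ u ∈ p.support, u ∈ A),
      (lift p h).edges.map (Sym2.map Subtype.val) = p.edges
  | _, _, Walk.nil, _ => rfl
  | _, _, Walk.cons hadj q, h => by
      exact congrArg (List.cons _) (lift_edges q _)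

lemma ends_edge_not_mem {G : SimpleGraph V} {x y : V} (p : G.Walk x y)
    (hp : p.IsPath) (hlen : 2 ≤ p.length) : s(x, y) ∉ p.edges := by
  cases p with
  | nil => simp
  | cons hadj q =>
    rename_i b
    rw [Walk.cons_isPath_iff] at hp
    rw [Walk.edges_cons, List.mem_cons]
    rintro (he | he)
    · rw [Sym2.eq_iff] at he
      rcases he with ⟨-, rfl⟩ | ⟨rfl, rfl⟩
      · have := Walk.isPath_iff_eq_nil.1 hp.1
        subst this
        simp at hlen
      · exact G.irrefl hadj
    · exact hp.2 (Walk.fst_mem_support_of_mem_edges q he)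

end MyAux

theorem stmt16 [Fintype V] (G : SimpleGraph V) (k : ℕ) (hk : 3 ≤ k)
    (σ : Fin (Fintype.card V) ≃ V) (hσ : KSimplicialOrdering G k σ) :
    ∀ (v : V) (c : G.Walk v v), IsInducedCycle G c → ¬ (k + 1 ≤ c.length) := by
  classical
  intro v c hic hlen
  obtain ⟨hcyc, hchord⟩ := hic
  -- choose the minimal index among support vertices
  have hne : (c.support.toFinset.image σ.symm).Nonempty :=
    ⟨σ.symm v, Finset.mem_image.2 ⟨v, by simp [Walk.start_mem_support], rfl⟩⟩
  set i := (c.support.toFinset.image σ.symm).min' hne with hidef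
  have hiv : σ i ∈ c.support := by
    have h := Finset.min'_mem _ hne
    rw [Finset.mem_image] at h
    obtain ⟨u, hu, hui⟩ := h
    rw [← hidef] at hui
    rw [← hui, Equiv.apply_symm_apply]
    exact List.mem_toFinset.1 hu
  have hmin : ∀ u ∈ c.support, i ≤ σ.symm u := fun u hu =>
    Finset.min'_le _ _ (Finset.mem_image.2 ⟨u, List.mem_toFinset.2 hu, rfl⟩)
  set w := σ i with hwdef
  -- rotate the cycle to start at w
  set c' := c.rotate w hiv with hc'def
  have hc'cyc : c'.IsCycle := hcyc.rotate hiv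
  have hc'mem : ∀ u, u ∈ c'.support → u ∈ c.support := by
    intro u hu
    rw [Walk.support_eq_cons c', List.mem_cons] at hu
    rcases hu with rfl | hu
    · exact hiv
    · have := (Walk.support_rotate c w hiv).mem_iff.1 hu
      rw [Walk.support_eq_cons c]
      exact List.mem_cons_of_mem _ this
  have hc'edges : ∀ e, e ∈ c'.edges ↔ e ∈ c.edges :=
    fun e => (Walk.rotate_edges c w hiv).mem_iff
  have hc'len : c'.length = c.length := by
    have := (Walk.rotate_edges c w hiv).perm.length_eq
    rwa [Walk.length_edges, Walk.length_edges] at this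
  -- decompose c' = cons h1 (p.concat h2)
  obtain ⟨x, h1, q, hq⟩ := Walk.not_nil_iff.1 hc'cyc.not_nil
  have hqlen : q.length + 1 = c.length := by
    rw [← hc'len, hq]; simp
  have hqnn : ¬ q.Nil := Walk.not_nil_iff_lt_length.2 (by omega)
  obtain ⟨x2, hq1, q1, hq1e⟩ := Walk.not_nil_iff.1 hqnn
  obtain ⟨y, p, h2, hq2⟩ := Walk.exists_cons_eq_concat hq1 q1
  rw [hq1e, hq2] at hq
  -- basic facts
  have hlenp : p.length + 2 = c.length := by
    rw [← hc'len, hq]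
    simp [Walk.length_concat]
  have hsupc' : c'.support = w :: (p.support ++ [w]) := by
    rw [hq, Walk.support_cons, Walk.support_concat]
  have hedgec' : c'.edges = s(w, x) :: (p.edges ++ [s(y, w)]) := by
    rw [hq, Walk.edges_cons, Walk.edges_concat]
    simp
  have htail : (p.support ++ [w]).Nodup := by
    have := hc'cyc.2
    rwa [hsupc', List.tail_cons] at this
  have hwp : w ∉ p.support := by
    intro h
    rcases List.nodup_append.1 htail with ⟨-, -, hd⟩
    exact hd w h w (by simp) rfl
  have hpnodup : p.support.Nodup := (List.nodup_append.1 htail).1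
  have hppath : p.IsPath := (Walk.isPath_def p).2 hpnodup
  have hpmemc' : ∀ u ∈ p.support, u ∈ c'.support := by
    intro u hu; rw [hsupc']; simp [hu]
  have hpmemc : ∀ u ∈ p.support, u ∈ c.support := fun u hu => hc'mem u (hpmemc' u hu)
  have hwc : w ∈ c.support := hiv
  have hplen : k - 1 ≤ p.length := by omega
  -- chord property of p
  have hpchord : ∀ u u' : V, u ∈ p.support → u' ∈ p.support → G.Adj u u' →
      s(u, u') ∈ p.edges := by
    intro u u' hu hu' hadj
    have he : s(u, u') ∈ c'.edges :=
      (hc'edges _).2 (hchord u u' (hpmemc u hu) (hpmemc u' hu') hadj)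
    rw [hedgec', List.mem_cons, List.mem_append, List.mem_singleton] at he
    rcases he with he | he | he
    · rw [Sym2.eq_iff] at he
      rcases he with ⟨rfl, rfl⟩ | ⟨rfl, rfl⟩
      · exact absurd hu hwp
      · exact absurd hu' hwp
    · exact he
    · rw [Sym2.eq_iff] at he
      rcases he with ⟨rfl, rfl⟩ | ⟨rfl, rfl⟩
      · exact absurd hu' hwp
      · exact absurd hu hwp
  have hxp : x ∈ p.support := p.start_mem_support
  have hyp : y ∈ p.support := p.end_mem_support
  have hxw : x ≠ w := fun h => hwp (h ▸ hxp)
  have hyw : y ≠ w := fun h => hwp (h ▸ hyp)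
  have hxy : x ≠ y := by
    rintro rfl
    have := Walk.isPath_iff_eq_nil.1 hppath
    subst this
    simp at hlenp
    omega
  have hnadjxy : ¬ G.Adj x y := by
    intro hadj
    exact MyAux.ends_edge_not_mem p hppath (by omega) (hpchord x y hxp hyp hadj)
  -- vertices not adjacent to w except x and y
  have hinternal : ∀ u ∈ p.support, u ≠ x → u ≠ y → ¬ G.Adj w u := by
    intro u hu hux huy hadj
    have he : s(w, u) ∈ c'.edges :=
      (hc'edges _).2 (hchord w u hwc (hpmemc u hu) hadj)
    rw [hedgec', List.mem_cons, List.mem_append, List.mem_singleton] at he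
    rcases he with he | he | he
    · rw [Sym2.eq_iff] at he
      rcases he with ⟨-, rfl⟩ | ⟨rfl, rfl⟩
      · exact hux rfl
      · exact hwp hu
    · exact hwp (Walk.fst_mem_support_of_mem_edges p he)
    · rw [Sym2.eq_iff] at he
      rcases he with ⟨rfl, rfl⟩ | ⟨-, rfl⟩
      · exact hwp hu
      · exact huy rfl
  -- move to the induced subgraph
  have hwA : w ∈ laterSet σ i := by
    simp [laterSet, hwdef]
  have hA : ∀ u ∈ p.support, u ∈ laterSet σ i := fun u hu => hmin u (hpmemc u hu)
  have hsimp := (hσ i).2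
  set A := laterSet σ i with hAdef
  set p' := MyAux.lift p hA with hp'def
  have hval : ∀ u' : A, u' ∈ p'.support → (u' : V) ∈ p.support := by
    intro u' hu'
    rw [← MyAux.lift_support p hA]
    exact List.mem_map_of_mem hu'
  have hp'path : p'.IsPath := by
    rw [Walk.isPath_def]
    have := MyAux.lift_support p hA
    have h2 : (p'.support.map Subtype.val).Nodup := this ▸ hpnodup
    exact h2.of_map _
  have hp'edge : ∀ u' w' : A, ((u' : V) ∈ p.support) → ((w' : V) ∈ p.support) →
      s((u' : V), (w' : V)) ∈ p.edges → s(u', w') ∈ p'.edges := by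
    intro u' w' hu hw he
    rw [← MyAux.lift_edges p hA] at he
    obtain ⟨e, heMem, heEq⟩ := List.mem_map.1 he
    have : e = s(u', w') := by
      apply Sym2.map.injective Subtype.val_injective
      rw [heEq, Sym2.map_pair_eq]
    rwa [← this]
  have key := hsimp ⟨x, hA x hxp⟩ ⟨y, hA y hyp⟩
    (by exact h1) (by exact h2.symm)
    (by intro h; exact hnadjxy h)
    (by intro h; exact hxy (congrArg Subtype.val h))
    p'
    ⟨hp'path, by
      intro u' w' hu' hw' hadj
      exact hp'edge u' w' (hval u' hu') (hval w' hw')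
        (hpchord _ _ (hval u' hu') (hval w' hw') hadj)⟩
    (by
      intro u' ⟨hu', hux, huy⟩
      have huP : (u' : V) ∈ p.support := hval u' hu'
      have hux' : (u' : V) ≠ x := fun h => hux (Subtype.ext h)
      have huy' : (u' : V) ≠ y := fun h => huy (Subtype.ext h)
      constructor
      · intro h
        have hv : (u' : V) = w := congrArg Subtype.val h
        rw [hv] at huP
        exact hwp huP
      · intro h
        exact hinternal _ huP hux' huy' h)
  rw [hp'def, MyAux.lift_length] at key
  omega
end
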